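/- Let w ∈ S_n contain a 132 pattern, and let p, q be as defined: p is the largest index t such that there exist i < t < j with w(i) < w(j) < w(t), and q is the largest index j > p with w(j) < w(p) and ∃ i < p, w(i) < w(j). Then ℓ(w t_{p,q}) = ℓ(w) − 1, where t_{p,q} is the transposition of positions p and q and ℓ denotes the number of inversions. -/

import Mathlib

/-- The number of inversions of a permutation of `Fin n`. -/
def numInv {n : ℕ} (w : Equiv.Perm (Fin n)) : ℕ :=
  (Finset.univ.filter (fun x : Fin n × Fin n => x.1 < x.2 ∧ w x.2 < w x.1)).card

/-- Forward map in the inversion bijection. -/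
def gmap {n : ℕ} (w : Equiv.Perm (Fin n)) (p q : Fin n) (x : Fin n × Fin n) : Fin n × Fin n :=
  if x.2 = q ∧ x.1 < p ∧ w q < w x.1 ∧ w x.1 < w p then (x.1, p)
  else if x.1 = p ∧ q < x.2 ∧ w q < w x.2 ∧ w x.2 < w p then (q, x.2)
  else x

/-- Backward map in the inversion bijection. -/
def hmap {n : ℕ} (w : Equiv.Perm (Fin n)) (p q : Fin n) (y : Fin n × Fin n) : Fin n × Fin n :=
  if y.2 = p ∧ y.1 < p ∧ w q < w y.1 ∧ w y.1 < w p then (y.1, q)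
  else if y.1 = q ∧ q < y.2 ∧ w q < w y.2 ∧ w y.2 < w p then (p, y.2)
  else y

theorem key_lemma {n : ℕ} (w : Equiv.Perm (Fin n)) (p q : Fin n) (hpq : p < q)
    (hw : w q < w p)
    (hmid : ∀ r : Fin n, p < r → r < q → w q < w r → w r < w p → False) :
    numInv (w * Equiv.swap p q) + 1 = numInv w := by
  classical
  set v := w * Equiv.swap p q with hv
  have hvp : v p = w q := by simp [hv, Equiv.Perm.mul_apply]
  have hvq : v q = w p := by simp [hv, Equiv.Perm.mul_apply]
  have hvo : ∀ x : Fin n, x ≠ p → x ≠ q → v x = w x := fun x h1 h2 => by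
    simp [hv, Equiv.Perm.mul_apply, Equiv.swap_apply_of_ne_of_ne h1 h2]
  set Sw := Finset.univ.filter (fun x : Fin n × Fin n => x.1 < x.2 ∧ w x.2 < w x.1) with hSw
  set Sv := Finset.univ.filter (fun x : Fin n × Fin n => x.1 < x.2 ∧ v x.2 < v x.1) with hSv
  have hmemSw : ∀ x : Fin n × Fin n, x ∈ Sw ↔ x.1 < x.2 ∧ w x.2 < w x.1 := by
    intro x; simp [hSw]
  have hmemSv : ∀ x : Fin n × Fin n, x ∈ Sv ↔ x.1 < x.2 ∧ v x.2 < v x.1 := by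
    intro x; simp [hSv]
  have hpqSw : (p, q) ∈ Sw := (hmemSw _).2 ⟨hpq, hw⟩
  have hcard : (Sw.erase (p, q)).card = Sv.card := by
    apply Finset.card_nbij' (gmap w p q) (hmap w p q)
    · -- gmap maps into Sv
      rintro ⟨a, b⟩ hx
      rw [Finset.mem_coe] at hx ⊢
      rw [Finset.mem_erase, hmemSw] at hx
      obtain ⟨hne, hab, hba⟩ := hx
      dsimp only at hab hba
      unfold gmap
      dsimp only
      by_cases h1 : b = q ∧ a < p ∧ w q < w a ∧ w a < w p
      · rw [if_pos h1]
        obtain ⟨hbq, hap, h3, h4⟩ := h1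
        rw [hmemSv]
        exact ⟨hap, by rw [hvp, hvo a (ne_of_lt hap) (ne_of_lt (hap.trans hpq))]; exact h3⟩
      · rw [if_neg h1]
        by_cases h2 : a = p ∧ q < b ∧ w q < w b ∧ w b < w p
        · rw [if_pos h2]
          obtain ⟨hap, hqb, h3, h4⟩ := h2
          rw [hmemSv]
          exact ⟨hqb, by
            rw [hvq, hvo b (ne_of_gt (hpq.trans hqb)) (ne_of_gt hqb)]; exact h4⟩
        · rw [if_neg h2, hmemSv]
          refine ⟨hab, ?_⟩
          by_cases hbq : b = q
          · have hap : a ≠ p := fun hc => hne (by rw [hc, hbq])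
            have hwa : w q < w a := by rw [← hbq]; exact hba
            have haq : a ≠ q := fun hc => (lt_irrefl a (by rw [hc] at hab; rw [hbq] at hab; exact absurd hab (lt_irrefl q))).elim
            have hnp : ¬ (w a < w p) := by
              rcases lt_trichotomy a p with hlt | heq | hgt
              · exact fun hc => h1 ⟨hbq, hlt, hwa, hc⟩
              · exact absurd heq hap
              · intro hc
                have hrq : a < q := by rw [← hbq]; exact hab
                exact hmid a hgt hrq hwa hc
            have hpa : w p < w a := lt_of_le_of_ne (not_lt.1 hnp) (w.injective.ne hap).symm
            rw [hbq, hvq, hvo a hap (fun hc => haq hc)]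
            exact hpa
          · by_cases hap : a = p
            · have hbp : b ≠ p := fun hc => absurd hab (by rw [hc, hap]; exact lt_irrefl p)
              have hba' : w b < w p := by rw [← hap]; exact hba
              have hnb : ¬ (w q < w b) := by
                rcases lt_trichotomy b q with hlt | heq | hgt
                · intro hc
                  have : p < b := by rw [← hap]; exact hab
                  exact hmid b this hlt hc hba'
                · exact absurd heq hbq
                · exact fun hc => h2 ⟨hap, hgt, hc, hba'⟩
              have hbq2 : w b < w q := lt_of_le_of_ne (not_lt.1 hnb) (w.injective.ne hbq)
              rw [hap, hvp, hvo b hbp hbq]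
              exact hbq2
            · by_cases hbp : b = p
              · have hap2 : a < p := by rw [← hbp]; exact hab
                have hba' : w p < w a := by rw [← hbp]; exact hba
                rw [hbp, hvp, hvo a hap (ne_of_lt (hap2.trans hpq))]
                exact hw.trans hba'
              · by_cases haq : a = q
                · have hba' : w b < w q := by rw [← haq]; exact hba
                  rw [haq, hvq, hvo b hbp hbq]
                  exact hba'.trans hw
                · rw [hvo a hap haq, hvo b hbp hbq]
                  exact hba
    · -- hmap maps into Sw.erase (p, q)
      rintro ⟨a, b⟩ hy
      rw [Finset.mem_coe] at hy ⊢
      rw [hmemSv] at hy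
      obtain ⟨hab, hba⟩ := hy
      dsimp only at hab hba
      unfold hmap
      dsimp only
      by_cases h1 : b = p ∧ a < p ∧ w q < w a ∧ w a < w p
      · rw [if_pos h1]
        obtain ⟨hbp, hap, h3, h4⟩ := h1
        rw [Finset.mem_erase, hmemSw]
        refine ⟨?_, hap.trans hpq, h3⟩
        intro hc
        rw [Prod.mk.injEq] at hc
        exact absurd hc.1 (ne_of_lt hap)
      · rw [if_neg h1]
        by_cases h2 : a = q ∧ q < b ∧ w q < w b ∧ w b < w p
        · rw [if_pos h2]
          obtain ⟨haq, hqb, h3, h4⟩ := h2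
          rw [Finset.mem_erase, hmemSw]
          refine ⟨?_, hpq.trans hqb, h4⟩
          intro hc
          rw [Prod.mk.injEq] at hc
          exact absurd hc.2 (ne_of_gt hqb)
        · rw [if_neg h2, Finset.mem_erase, hmemSw]
          by_cases hap : a = p
          · have hbq : b ≠ q := by
              intro hc
              rw [hap, hc, hvq, hvp] at hba
              exact absurd hba (not_lt.2 (le_of_lt hw))
            have hbp : b ≠ p := fun hc => absurd hab (by rw [hc, hap]; exact lt_irrefl p)
            have hba' : w b < w q := by
              have := hba
              rw [hap, hvp, hvo b hbp hbq] at this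
              exact this
            refine ⟨?_, hab, show w b < w a by rw [hap]; exact hba'.trans hw⟩
            intro hc
            rw [Prod.mk.injEq] at hc
            exact absurd hc.2 hbq
          · by_cases haq : a = q
            · have hqb : q < b := by rw [← haq]; exact hab
              have hbq : b ≠ q := ne_of_gt hqb
              have hbp : b ≠ p := ne_of_gt (hpq.trans hqb)
              have hba' : w b < w p := by
                have := hba
                rw [haq, hvq, hvo b hbp hbq] at this
                exact this
              have hnb : ¬ (w q < w b) := fun hc => h2 ⟨haq, hqb, hc, hba'⟩
              have hbq2 : w b < w q := lt_of_le_of_ne (not_lt.1 hnb) (w.injective.ne hbq)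
              refine ⟨?_, hab, show w b < w a by rw [haq]; exact hbq2⟩
              intro hc
              rw [Prod.mk.injEq] at hc
              exact absurd (haq ▸ hc.1 : q = p) (ne_of_gt hpq)
            · by_cases hbp : b = p
              · have hap2 : a < p := by rw [← hbp]; exact hab
                have hba' : w q < w a := by
                  have := hba
                  rw [hbp, hvp, hvo a hap (ne_of_lt (hap2.trans hpq))] at this
                  exact this
                have hnp : ¬ (w a < w p) := fun hc => h1 ⟨hbp, hap2, hba', hc⟩
                have hpa : w p < w a := lt_of_le_of_ne (not_lt.1 hnp) (w.injective.ne hap).symm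
                refine ⟨?_, hab, by rw [hbp]; exact hpa⟩
                intro hc
                rw [Prod.mk.injEq] at hc
                exact absurd hc.1 hap
              · by_cases hbq : b = q
                · have hba' : w p < w a := by
                    have := hba
                    rw [hbq, hvq, hvo a hap haq] at this
                    exact this
                  refine ⟨?_, hab, by rw [hbq]; exact hw.trans hba'⟩
                  intro hc
                  rw [Prod.mk.injEq] at hc
                  exact absurd hc.1 hap
                · have hba' : w b < w a := by
                    have := hba
                    rw [hvo a hap haq, hvo b hbp hbq] at this
                    exact this
                  refine ⟨?_, hab, hba'⟩
                  intro hc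
                  rw [Prod.mk.injEq] at hc
                  exact absurd hc.1 hap
    · -- left inverse
      rintro ⟨a, b⟩ hx
      rw [Finset.mem_coe, Finset.mem_erase, hmemSw] at hx
      obtain ⟨hne, hab, hba⟩ := hx
      dsimp only at hab hba
      unfold gmap hmap
      dsimp only
      by_cases h1 : b = q ∧ a < p ∧ w q < w a ∧ w a < w p
      · rw [if_pos h1]
        dsimp only
        rw [if_pos ⟨rfl, h1.2.1, h1.2.2.1, h1.2.2.2⟩, h1.1]
      · rw [if_neg h1]
        by_cases h2 : a = p ∧ q < b ∧ w q < w b ∧ w b < w p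
        · rw [if_pos h2]
          dsimp only
          rw [if_neg, if_pos ⟨rfl, h2.2.1, h2.2.2.1, h2.2.2.2⟩, h2.1]
          rintro ⟨-, hc, -, -⟩
          exact absurd hc (asymm hpq)
        · rw [if_neg h2]
          dsimp only
          rw [if_neg, if_neg]
          · rintro ⟨hc, hqb, h3, h4⟩
            rw [hc] at hba
            exact absurd hba (not_lt.2 (le_of_lt h3))
          · rintro ⟨hc, hap, h3, h4⟩
            rw [hc] at hba
            exact absurd hba (not_lt.2 (le_of_lt h4))
    · -- right inverse
      rintro ⟨a, b⟩ hy
      rw [Finset.mem_coe, hmemSv] at hy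
      obtain ⟨hab, hba⟩ := hy
      dsimp only at hab hba
      unfold gmap hmap
      dsimp only
      by_cases h1 : b = p ∧ a < p ∧ w q < w a ∧ w a < w p
      · rw [if_pos h1]
        dsimp only
        rw [if_pos ⟨rfl, h1.2.1, h1.2.2.1, h1.2.2.2⟩, h1.1]
      · rw [if_neg h1]
        by_cases h2 : a = q ∧ q < b ∧ w q < w b ∧ w b < w p
        · rw [if_pos h2]
          dsimp only
          rw [if_neg, if_pos ⟨rfl, h2.2.1, h2.2.2.1, h2.2.2.2⟩, h2.1]
          rintro ⟨-, hc, -, -⟩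
          exact absurd hc (lt_irrefl p)
        · rw [if_neg h2]
          dsimp only
          rw [if_neg, if_neg]
          · rintro ⟨hc, hqb, h3, h4⟩
            rw [hc, hvp, hvo b (ne_of_gt (hpq.trans hqb)) (ne_of_gt hqb)] at hba
            exact absurd hba (not_lt.2 (le_of_lt h3))
          · rintro ⟨hc, hap, h3, h4⟩
            rw [hc, hvq, hvo a (ne_of_lt hap) (ne_of_lt (hap.trans hpq))] at hba
            exact absurd hba (not_lt.2 (le_of_lt h4))
  have hfin := Finset.card_erase_add_one hpqSw
  unfold numInv
  rw [← hSw, ← hSv, ← hfin, hcard]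

theorem stmt_2 {n : ℕ} (w : Equiv.Perm (Fin n)) (p q : Fin n)
    (hp : ∃ i j : Fin n, i < p ∧ p < j ∧ w i < w j ∧ w j < w p)
    (hpmax : ∀ t : Fin n, (∃ i j : Fin n, i < t ∧ t < j ∧ w i < w j ∧ w j < w t) → t ≤ p)
    (hq : p < q ∧ w q < w p ∧ ∃ i : Fin n, i < p ∧ w i < w q)
    (hqmax : ∀ j : Fin n, p < j → w j < w p → (∃ i : Fin n, i < p ∧ w i < w j) → j ≤ q) :
    numInv (w * Equiv.swap p q) + 1 = numInv w := by
  obtain ⟨hpq, hwqp, i0, hi0p, hi0q⟩ := hq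
  apply key_lemma w p q hpq hwqp
  intro r hpr hrq h1 h2
  have : r ≤ p := hpmax r ⟨i0, q, hi0p.trans hpr, hrq, hi0q, h1⟩
  exact absurd hpr (not_lt.2 this)
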